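/- Let M ⊆ E be a chain component of φ and suppose that for some x ∈ E the ω-limit set ω(x) is contained in M and the Lyapunov exponent λ(x) exists. Then λ(x) ∈ Λ_Mo(M). -/

import Mathlib

open Filter Topology

section

variable {E : Type*} [MetricSpace E] [CompactSpace E]
variable {V : Type*} [NormedAddCommGroup V] [NormedSpace ℝ V] [FiniteDimensional ℝ V]

/-- `a` is a continuous `V`-valued cocycle over the flow `φ`. -/
def IsAddCocycle (φ : Flow ℝ E) (a : ℝ → E → V) : Prop :=
  Continuous (fun p : ℝ × E => a p.1 p.2) ∧
    ∀ t s x, a (t + s) x = a t (φ s x) + a s x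

/-- `(N, x, t)` is an `(ε, T)`-chain of the flow `φ` from `p` to `q`:
points `x 0 = p, x 1, …, x N = q` and times `t 0, …, t (N-1)` with `t i ≥ T`
and `dist (φ (t i) (x i)) (x (i+1)) < ε`. -/
def IsFlowChain (φ : Flow ℝ E) (ε T : ℝ) (N : ℕ) (x : ℕ → E) (t : ℕ → ℝ) (p q : E) : Prop :=
  0 < N ∧ x 0 = p ∧ x N = q ∧ (∀ i < N, T ≤ t i) ∧
    ∀ i < N, dist (φ (t i) (x i)) (x (i + 1)) < ε

/-- The finite-time Morse exponent of a chain: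
`(1 / (t 0 + ⋯ + t (N-1))) • (a (t 0) (x 0) + ⋯ + a (t (N-1)) (x (N-1)))`. -/
noncomputable def chainExp (a : ℝ → E → V) (N : ℕ) (x : ℕ → E) (t : ℕ → ℝ) : V :=
  (∑ i ∈ Finset.range N, t i)⁻¹ • ∑ i ∈ Finset.range N, a (t i) (x i)

/-- The Morse spectrum of `M ⊆ E`: intersection over `ε, T > 0` of the closures
of the sets of finite-time Morse exponents of `(ε,T)`-chains belonging to `M`. -/
noncomputable def morseSpec (φ : Flow ℝ E) (a : ℝ → E → V) (M : Set E) : Set V :=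
  ⋂ (ε : ℝ) (_ : 0 < ε) (T : ℝ) (_ : 0 < T), closure
    {v | ∃ N x t, ∃ p ∈ M, ∃ q ∈ M, IsFlowChain φ ε T N x t p q ∧ v = chainExp a N x t}

/-- `M` is chain transitive: any two points of `M` are joined by `(ε,T)`-chains
for all `ε, T > 0`. -/
def IsChainTransitiveSet (φ : Flow ℝ E) (M : Set E) : Prop :=
  ∀ p ∈ M, ∀ q ∈ M, ∀ ε > (0:ℝ), ∀ T > (0:ℝ), ∃ N x t, IsFlowChain φ ε T N x t p q

/-- A chain component is a maximal chain transitive subset. -/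
def IsChainComponent (φ : Flow ℝ E) (M : Set E) : Prop :=
  IsChainTransitiveSet φ M ∧
    ∀ M' : Set E, IsChainTransitiveSet φ M' → M ⊆ M' → M = M'


/-- The Lyapunov exponent of the cocycle `a` at `x` exists and equals `l`,
i.e. `(1/T) • a T x → l` as `T → +∞`. -/
def HasLyapExp (a : ℝ → E → V) (x : E) (l : V) : Prop :=
  Tendsto (fun T : ℝ => T⁻¹ • a T x) atTop (𝓝 l)

/-- The Lyapunov spectrum of a subset `Y ⊆ E`. -/
def lyapSpec (a : ℝ → E → V) (Y : Set E) : Set V :=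
  {l | ∃ x ∈ Y, HasLyapExp a x l}

/-- If the ω-limit set of `x` is contained in the chain component `M` and the
Lyapunov exponent of `a` at `x` exists, then it belongs to the Morse spectrum of `M`. -/
theorem lyapExp_mem_morseSpec_of_omegaLimit_subset (φ : Flow ℝ E) (a : ℝ → E → V)
    (ha : IsAddCocycle φ a) (M : Set E) (hM : IsChainComponent φ M)
    (x : E) (hω : (⋂ s : ℝ, closure {y : E | ∃ t ≥ s, y = φ t x}) ⊆ M)
    (l : V) (hl : HasLyapExp a x l) :
    l ∈ morseSpec φ a M := by
  classical
  set K : ℝ → Set E := fun s => closure {y : E | ∃ t ≥ s, y = φ t x} with hK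
  have hKne : ∀ s, (K s).Nonempty := fun s => ⟨φ s x, subset_closure ⟨s, le_refl s, rfl⟩⟩
  have hKcl : ∀ s, IsClosed (K s) := fun s => isClosed_closure
  have hKmono : ∀ s s' : ℝ, s ≤ s' → K s' ⊆ K s := by
    intro s s' hss'
    apply closure_mono
    rintro z ⟨t, ht, rfl⟩
    exact ⟨t, hss'.trans ht, rfl⟩
  have hdir : Directed (· ⊇ ·) K := fun s s' =>
    ⟨max s s', hKmono s _ (le_max_left _ _), hKmono s' _ (le_max_right _ _)⟩
  obtain ⟨y, hy⟩ := IsCompact.nonempty_iInter_of_directed_nonempty_isCompact_isClosed K hdir hKne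
    (fun s => (hKcl s).isCompact) hKcl
  have hyM : y ∈ M := hω hy
  have hnear : ∀ s : ℝ, ∀ ε' > (0:ℝ), ∃ t ≥ s, dist (φ t x) y < ε' := by
    intro s ε' hε'
    have hyω : y ∈ closure {z : E | ∃ t ≥ s, z = φ t x} := Set.mem_iInter.mp hy s
    obtain ⟨z, hz, hdz⟩ := Metric.mem_closure_iff.mp hyω ε' hε'
    obtain ⟨t, ht, rfl⟩ := hz
    exact ⟨t, ht, by rwa [dist_comm]⟩
  rw [morseSpec]
  simp only [Set.mem_iInter]
  intro ε hε T hT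
  rw [Metric.mem_closure_iff]
  intro δ hδ
  have hcont : Continuous fun z : E => φ T z := φ.continuous continuous_const continuous_id
  obtain ⟨δ₀, hδ₀, hδ₀'⟩ := Metric.continuous_iff.mp hcont y ε hε
  obtain ⟨s₁, hs₁0, hs₁⟩ := hnear 0 δ₀ hδ₀
  set c : V := a T y - a (T + s₁) x with hc
  -- the limit of the chain exponents
  have h1 : Tendsto (fun s : ℝ => (s - s₁)⁻¹) atTop (𝓝 0) := by
    apply tendsto_inv_atTop_zero.comp
    exact tendsto_atTop_add_const_right atTop (-s₁) tendsto_id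
  have hratio : Tendsto (fun s : ℝ => (s - s₁)⁻¹ * s) atTop (𝓝 1) := by
    have h2 : Tendsto (fun s : ℝ => 1 + s₁ * (s - s₁)⁻¹) atTop (𝓝 (1 + s₁ * 0)) :=
      tendsto_const_nhds.add (h1.const_mul s₁)
    rw [mul_zero, add_zero] at h2
    refine h2.congr' ?_
    filter_upwards [eventually_gt_atTop s₁] with s hs
    have hne : s - s₁ ≠ 0 := by linarith [hs]
    field_simp
    ring
  have hterm2 : Tendsto (fun s : ℝ => (s - s₁)⁻¹ • a s x) atTop (𝓝 l) := by
    have h3 : Tendsto (fun s : ℝ => ((s - s₁)⁻¹ * s) • (s⁻¹ • a s x)) atTop (𝓝 ((1:ℝ) • l)) :=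
      hratio.smul hl
    rw [one_smul] at h3
    refine h3.congr' ?_
    filter_upwards [eventually_gt_atTop (max s₁ 0)] with s hs
    have hs0 : s ≠ 0 := by
      have := lt_of_le_of_lt (le_max_right s₁ 0) hs; linarith
    rw [smul_smul, mul_assoc, mul_inv_cancel₀ hs0, mul_one]
  have hf : Tendsto (fun s : ℝ => (s - s₁)⁻¹ • (c + a s x)) atTop (𝓝 l) := by
    have := (h1.smul_const c).add hterm2
    rw [zero_smul, zero_add] at this
    refine this.congr fun s => ?_
    rw [smul_add]
  have hev : ∀ᶠ s in atTop, dist ((fun s : ℝ => (s - s₁)⁻¹ • (c + a s x)) s) l < δ :=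
    Metric.tendsto_nhds.mp hf δ hδ
  obtain ⟨s₀, hs₀⟩ := eventually_atTop.mp (hev.and (eventually_ge_atTop (s₁ + 2 * T)))
  obtain ⟨s₂, hs₂0, hs₂⟩ := hnear s₀ ε hε
  obtain ⟨hdist, hbig⟩ := hs₀ s₂ hs₂0
  -- the chain
  set xs : ℕ → E := fun i => if i = 1 then φ (T + s₁) x else y with hxs
  set ts : ℕ → ℝ := fun i => if i = 0 then T else s₂ - s₁ - T with hts
  refine ⟨chainExp a 2 xs ts, ⟨2, xs, ts, y, hyM, y, hyM, ?_, rfl⟩, ?_⟩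
  · refine ⟨by norm_num, by simp [hxs], by simp [hxs], ?_, ?_⟩
    · intro i hi
      interval_cases i
      · simp [hts]
      · simp only [hts, if_neg one_ne_zero]
        linarith
    · intro i hi
      interval_cases i
      · simp only [hxs, hts, if_pos rfl, if_neg one_ne_zero]
        have h4 : φ (T + s₁) x = φ T (φ s₁ x) := φ.map_add T s₁ x
        rw [h4, dist_comm]
        exact hδ₀' _ hs₁
      · have h5 : φ (s₂ - s₁ - T) (φ (T + s₁) x) = φ s₂ x := by
          rw [← φ.map_add]
          congr 1
          ring
        simp only [hxs, hts]
        norm_num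
        rw [h5]
        exact hs₂
  · -- dist l (chainExp a 2 xs ts) < δ
    have hce : chainExp a 2 xs ts = (s₂ - s₁)⁻¹ • (c + a s₂ x) := by
      have hsum : ∑ i ∈ Finset.range 2, ts i = s₂ - s₁ := by
        simp [Finset.sum_range_succ, hts]
      have hcoc : a s₂ x = a (s₂ - s₁ - T) (φ (T + s₁) x) + a (T + s₁) x := by
        have := ha.2 (s₂ - s₁ - T) (T + s₁) x
        rw [show s₂ - s₁ - T + (T + s₁) = s₂ by ring] at this
        exact this
      have hsum2 : ∑ i ∈ Finset.range 2, a (ts i) (xs i) = c + a s₂ x := by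
        simp only [Finset.sum_range_succ, Finset.sum_range_zero, zero_add, hts, hxs]
        simp only [if_pos rfl, if_neg one_ne_zero]
        rw [hcoc, hc]
        abel
      rw [chainExp, hsum, hsum2]
    rw [hce, dist_comm]
    exact hdist

end
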